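/- arXiv:2011.10944 — 3 statements merged into one kernel-verified Lean document; each statement's English description precedes it below -/
import Mathlib

section
/- Let g₁, g₂ : ℝ^P → ℝⁿ be maps that are differentiable at θ₀ ∈ ℝ^P, and let W be an n×n real matrix such that ‖W·g₂(θ₀)‖ = 1 (with respect to the Euclidean inner product on ℝⁿ). For any n×n real matrix V with ‖V·g₂(θ₀)‖ = 1, define the projected alignment θ-gradient at (θ₀, V) as the linear functional G_V : ℝ^P → ℝ given by G_V(h) = 2·⟨ Π_V( V·g₁(θ₀) − V·g₂(θ₀) ), V·(Dg₁(θ₀)(h) − Dg₂(θ₀)(h)) ⟩, where Π_V(v) = v − ⟨v, V·g₂(θ₀)⟩·V·g₂(θ₀) and Dg_i(θ₀) denotes the Fréchet derivative of g_i at θ₀. Then G_{−W} = G_W as linear functionals on ℝ^P. -/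
open RealInnerProductSpace

lemma aux_neg_proj {n : ℕ} (a b d : EuclideanSpace ℝ (Fin n)) :
    ⟪(-a - -b) - ⟪-a - -b, -b⟫ • (-b), -d⟫ = ⟪(a - b) - ⟪a - b, b⟫ • b, d⟫ := by
  have h1 : -a - -b = -(a - b) := by abel
  rw [h1, inner_neg_neg, smul_neg, sub_neg_eq_add, inner_neg_right, inner_add_left,
    inner_neg_left]
  simp only [inner_sub_left]
  ring

/-- The tangential alignment-loss θ-gradients of BYOL′ (predictor `W`) and
RAFT (predictor `-W`) coincide. -/
theorem projected_alignment_theta_grad_neg_eq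
    {P n : ℕ}
    (g₁ g₂ : EuclideanSpace ℝ (Fin P) → EuclideanSpace ℝ (Fin n))
    (θ₀ : EuclideanSpace ℝ (Fin P))
    (hg₁ : DifferentiableAt ℝ g₁ θ₀) (hg₂ : DifferentiableAt ℝ g₂ θ₀)
    (W : Matrix (Fin n) (Fin n) ℝ)
    (hW : ‖Matrix.toEuclideanLin W (g₂ θ₀)‖ = 1)
    (G : Matrix (Fin n) (Fin n) ℝ → EuclideanSpace ℝ (Fin P) → ℝ)
    (hG : ∀ (V : Matrix (Fin n) (Fin n) ℝ) (h : EuclideanSpace ℝ (Fin P)),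
      G V h =
        2 * ⟪(Matrix.toEuclideanLin V (g₁ θ₀) - Matrix.toEuclideanLin V (g₂ θ₀)) -
              ⟪Matrix.toEuclideanLin V (g₁ θ₀) - Matrix.toEuclideanLin V (g₂ θ₀),
                Matrix.toEuclideanLin V (g₂ θ₀)⟫ • Matrix.toEuclideanLin V (g₂ θ₀),
            Matrix.toEuclideanLin V (fderiv ℝ g₁ θ₀ h - fderiv ℝ g₂ θ₀ h)⟫) :
    G (-W) = G W := by
  funext h
  rw [hG, hG]
  have hneg : ∀ x : EuclideanSpace ℝ (Fin n),
      Matrix.toEuclideanLin (-W) x = -(Matrix.toEuclideanLin W x) := by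
    intro x
    simp [Matrix.toEuclideanLin_apply, Matrix.neg_mulVec]
  simp only [hneg]
  rw [aux_neg_proj]
end

section
/- Let g₂ : ℝ^P → ℝⁿ be differentiable at θ₀ ∈ ℝ^P, let z̄ ∈ ℝⁿ be a fixed vector, and let W be an n×n real matrix with ‖W·g₂(θ₀)‖ = 1 (Euclidean norm). For any n×n real matrix V with ‖V·g₂(θ₀)‖ = 1, define the projected BYOL′ cross-model θ-gradient at (θ₀, V) as the linear functional B_V(h) = 2·⟨ Π_V( V·g₂(θ₀) − z̄ ), V·Dg₂(θ₀)(h) ⟩, and the projected RAFT cross-model θ-gradient at (θ₀, V) as R_V(h) = −2·⟨ Π_V( V·g₂(θ₀) − z̄ ), V·Dg₂(θ₀)(h) ⟩, where Π_V(v) = v − ⟨v, V·g₂(θ₀)⟩·V·g₂(θ₀). Then B_{−W} = R_W as linear functionals on ℝ^P. -/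
open RealInnerProductSpace

/-- The tangential cross-model θ-gradient of BYOL′ with predictor `-W` coincides with
that of RAFT with predictor `W`. -/
theorem projected_cross_model_theta_grad_correspondence
    {P n : ℕ}
    (g₂ : EuclideanSpace ℝ (Fin P) → EuclideanSpace ℝ (Fin n))
    (θ₀ : EuclideanSpace ℝ (Fin P))
    (hg₂ : DifferentiableAt ℝ g₂ θ₀)
    (zbar : EuclideanSpace ℝ (Fin n))
    (W : Matrix (Fin n) (Fin n) ℝ)
    (hW : ‖Matrix.toEuclideanLin W (g₂ θ₀)‖ = 1)
    (B R : Matrix (Fin n) (Fin n) ℝ → EuclideanSpace ℝ (Fin P) → ℝ)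
    (hB : ∀ (V : Matrix (Fin n) (Fin n) ℝ) (h : EuclideanSpace ℝ (Fin P)),
      B V h =
        2 * ⟪(Matrix.toEuclideanLin V (g₂ θ₀) - zbar) -
              ⟪Matrix.toEuclideanLin V (g₂ θ₀) - zbar,
                Matrix.toEuclideanLin V (g₂ θ₀)⟫ • Matrix.toEuclideanLin V (g₂ θ₀),
            Matrix.toEuclideanLin V (fderiv ℝ g₂ θ₀ h)⟫)
    (hR : ∀ (V : Matrix (Fin n) (Fin n) ℝ) (h : EuclideanSpace ℝ (Fin P)),
      R V h =
        -(2 * ⟪(Matrix.toEuclideanLin V (g₂ θ₀) - zbar) -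
              ⟪Matrix.toEuclideanLin V (g₂ θ₀) - zbar,
                Matrix.toEuclideanLin V (g₂ θ₀)⟫ • Matrix.toEuclideanLin V (g₂ θ₀),
            Matrix.toEuclideanLin V (fderiv ℝ g₂ θ₀ h)⟫)) :
    B (-W) = R W := by
  funext h
  rw [hB, hR]
  have hneg : ∀ x, Matrix.toEuclideanLin (-W) x = -(Matrix.toEuclideanLin W x) := by
    intro x; simp [map_neg]
  rw [hneg, hneg]
  set w := Matrix.toEuclideanLin W (g₂ θ₀) with hw
  set u := Matrix.toEuclideanLin W (fderiv ℝ g₂ θ₀ h) with hu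
  have hww : ⟪w, w⟫ = 1 := by
    rw [real_inner_self_eq_norm_sq, hW]; norm_num
  simp only [inner_sub_left, inner_sub_right, inner_neg_left, inner_neg_right,
    inner_smul_left, inner_smul_right, RCLike.ofReal_real_eq_id, id_eq, conj_trivial]
  rw [hww]; ring
end

section
/- Let g₂ : ℝ^P → ℝⁿ, let θ₀ ∈ ℝ^P, let z̄ ∈ ℝⁿ be a fixed vector, and let W be an n×n real matrix with ‖W·g₂(θ₀)‖ = 1 (Euclidean norm). For any n×n real matrix V with ‖V·g₂(θ₀)‖ = 1, define the projected BYOL′ cross-model W-gradient at (θ₀, V) as the linear functional on n×n real matrices B_V(K) = 2·⟨ Π_V( V·g₂(θ₀) − z̄ ), K·g₂(θ₀) ⟩, and the projected RAFT cross-model W-gradient at (θ₀, V) as R_V(K) = −2·⟨ Π_V( V·g₂(θ₀) − z̄ ), K·g₂(θ₀) ⟩, where Π_V(v) = v − ⟨v, V·g₂(θ₀)⟩·V·g₂(θ₀). Then B_{−W} = −R_W as linear functionals on the space of n×n real matrices. -/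
open RealInnerProductSpace

/-- The tangential cross-model predictor-gradient of BYOL′ with predictor `-W` is the
negative of that of RAFT with predictor `W`. -/
theorem projected_cross_model_W_grad_correspondence
    {P n : ℕ}
    (g₂ : EuclideanSpace ℝ (Fin P) → EuclideanSpace ℝ (Fin n))
    (θ₀ : EuclideanSpace ℝ (Fin P))
    (zbar : EuclideanSpace ℝ (Fin n))
    (W : Matrix (Fin n) (Fin n) ℝ)
    (hW : ‖Matrix.toEuclideanLin W (g₂ θ₀)‖ = 1)
    (B R : Matrix (Fin n) (Fin n) ℝ → Matrix (Fin n) (Fin n) ℝ → ℝ)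
    (hB : ∀ (V K : Matrix (Fin n) (Fin n) ℝ),
      B V K =
        2 * ⟪(Matrix.toEuclideanLin V (g₂ θ₀) - zbar) -
              ⟪Matrix.toEuclideanLin V (g₂ θ₀) - zbar,
                Matrix.toEuclideanLin V (g₂ θ₀)⟫ • Matrix.toEuclideanLin V (g₂ θ₀),
            Matrix.toEuclideanLin K (g₂ θ₀)⟫)
    (hR : ∀ (V K : Matrix (Fin n) (Fin n) ℝ),
      R V K =
        -(2 * ⟪(Matrix.toEuclideanLin V (g₂ θ₀) - zbar) -
              ⟪Matrix.toEuclideanLin V (g₂ θ₀) - zbar,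
                Matrix.toEuclideanLin V (g₂ θ₀)⟫ • Matrix.toEuclideanLin V (g₂ θ₀),
            Matrix.toEuclideanLin K (g₂ θ₀)⟫)) :
    B (-W) = fun K => -(R W K) := by
  funext K
  rw [hB, hR, neg_neg]
  have hneg : Matrix.toEuclideanLin (-W) (g₂ θ₀) = -(Matrix.toEuclideanLin W (g₂ θ₀)) := by
    simp [map_neg]
  set w := Matrix.toEuclideanLin W (g₂ θ₀) with hw
  set k := Matrix.toEuclideanLin K (g₂ θ₀) with hk
  have hww : ⟪w, w⟫ = 1 := by
    rw [real_inner_self_eq_norm_sq, hW]; norm_num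
  rw [hneg]
  simp only [inner_sub_left, inner_sub_right, inner_neg_left, inner_neg_right,
    inner_smul_left, inner_smul_right, RCLike.ofReal_real_eq_id, id_eq, conj_trivial, hww]
  ring
end
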